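/- Let G be a connected VT⁺ graph on a finite set Y and let ε > 0. Fix a vertex y₀ ∈ Y, for each d from 0 to the diameter of G let n_d be the number of vertices at graph distance d from y₀, and set c = 1 / Σ_d n_d · e^{−ε·d}. Define H : Y → Y → ℝ by H(y,y') = c · e^{−ε·d(y,y')}, where d(y,y') is graph distance in G. Then H is a channel matrix from Y to Y (every row is nonnegative and sums to 1), H satisfies ε-differential privacy with respect to G, and under the uniform prior on Y the maximal utility over all guess functions g : Y → Y equals c, attained by the identity guess. -/

import Mathlib

open Finset

/-- The diameter of a graph on a finite vertex set. -/
noncomputable def graphDiam {Y : Type*} [Fintype Y] (G : SimpleGraph Y) : ℕ :=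
  Finset.univ.sup fun p : Y × Y => G.dist p.1 p.2

/-- The number of vertices at graph distance `d` from `r`. -/
noncomputable def nAtDist {Y : Type*} [Fintype Y] (G : SimpleGraph Y) (r : Y) (d : ℕ) : ℕ :=
  (Finset.univ.filter fun a => G.dist r a = d).card

/-- `∑ d from 0 to diam, n_d · e^{-ε d}`. -/
noncomputable def expDistSum {Y : Type*} [Fintype Y] (G : SimpleGraph Y) (ε : ℝ) (r : Y) : ℝ :=
  ∑ d ∈ Finset.range (graphDiam G + 1), (nAtDist G r d : ℝ) * Real.exp (-(ε * d))

/-- `ε`-differential privacy of a channel matrix with respect to a graph. -/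
def SatisfiesDP {Y Z : Type*} (G : SimpleGraph Y) (ε : ℝ) (H : Y → Z → ℝ) : Prop :=
  ∀ (z : Z) (y y' : Y), G.Adj y y' → H y z ≤ Real.exp ε * H y' z

/-- VT⁺ graphs. -/
def IsVTPlus {Y : Type*} [Fintype Y] (G : SimpleGraph Y) : Prop :=
  ∃ σ : Fin (Fintype.card Y) → (G ≃g G), ∀ y y' : Y, ∃ i, σ i y = y'
open Finset

lemma iso_dist_le {Y : Type*} {G : SimpleGraph Y} (hconn : G.Connected)
    (φ : G ≃g G) (u v : Y) : G.dist (φ u) (φ v) ≤ G.dist u v := by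
  obtain ⟨p, hp⟩ := (hconn u v).exists_walk_length_eq_dist
  calc G.dist (φ u) (φ v) ≤ (p.map φ.toHom).length := SimpleGraph.dist_le _
    _ = p.length := p.length_map _
    _ = G.dist u v := hp

lemma iso_dist {Y : Type*} {G : SimpleGraph Y} (hconn : G.Connected)
    (φ : G ≃g G) (u v : Y) : G.dist (φ u) (φ v) = G.dist u v := by
  refine le_antisymm (iso_dist_le hconn φ u v) ?_
  have := iso_dist_le hconn φ.symm (φ u) (φ v)
  simpa using this
theorem stmt5 {Y : Type*} [Fintype Y] [Nonempty Y]
    (G : SimpleGraph Y)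
    (hconn : G.Connected) (hVT : IsVTPlus G)
    (ε : ℝ) (hε : 0 < ε)
    (y₀ : Y) (c : ℝ) (hc : c = 1 / expDistSum G ε y₀)
    (H : Y → Y → ℝ)
    (hH : ∀ y y' : Y, H y y' = c * Real.exp (-(ε * G.dist y y'))) :
    (∀ y y' : Y, 0 ≤ H y y') ∧
    (∀ y : Y, ∑ y', H y y' = 1) ∧
    SatisfiesDP G ε H ∧
    (∀ g : Y → Y, ∑ z, (1 / (Fintype.card Y : ℝ)) * H (g z) z ≤ c) ∧
    (∑ z, (1 / (Fintype.card Y : ℝ)) * H z z = c) := by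
  -- step 1: fiberwise decomposition
  have hS : ∑ a : Y, Real.exp (-(ε * G.dist y₀ a)) = expDistSum G ε y₀ := by
    rw [expDistSum,
      ← Finset.sum_fiberwise_of_maps_to (g := fun a => G.dist y₀ a)
        (t := Finset.range (graphDiam G + 1))
        (fun a _ => Finset.mem_range.mpr (Nat.lt_succ_of_le
          (Finset.le_sup (f := fun p : Y × Y => G.dist p.1 p.2) (Finset.mem_univ (y₀, a)))))]
    refine Finset.sum_congr rfl fun d _ => ?_
    rw [nAtDist]
    rw [Finset.sum_congr rfl (fun a ha => by
        rw [(Finset.mem_filter.mp ha).2]), Finset.sum_const, nsmul_eq_mul]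
  have hSpos : 0 < expDistSum G ε y₀ := by
    rw [← hS]
    exact Finset.sum_pos (fun a _ => Real.exp_pos _) Finset.univ_nonempty
  have hcpos : 0 < c := by rw [hc]; positivity
  -- row sums via VT⁺
  have hrow : ∀ y : Y, ∑ a : Y, Real.exp (-(ε * G.dist y a)) = expDistSum G ε y₀ := by
    intro y
    obtain ⟨σ, hσ⟩ := hVT
    obtain ⟨i, hi⟩ := hσ y₀ y
    rw [← hS, ← Equiv.sum_comp (σ i).toEquiv (fun a => Real.exp (-(ε * G.dist y a)))]
    refine Finset.sum_congr rfl fun a _ => ?_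
    have : G.dist y ((σ i).toEquiv a) = G.dist y₀ a := by
      rw [← hi]; exact iso_dist hconn (σ i) y₀ a
    rw [this]
  have hnonneg : ∀ y y' : Y, 0 ≤ H y y' := fun y y' => by
    rw [hH]; positivity
  have hcard : (0 : ℝ) < Fintype.card Y := by
    exact_mod_cast Fintype.card_pos
  have hHle : ∀ y y' : Y, H y y' ≤ c := fun y y' => by
    rw [hH]
    calc c * Real.exp (-(ε * G.dist y y')) ≤ c * 1 := by
          refine mul_le_mul_of_nonneg_left ?_ hcpos.le
          exact Real.exp_le_one_iff.mpr (neg_nonpos.mpr (by positivity))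
      _ = c := mul_one c
  refine ⟨hnonneg, ?_, ?_, ?_, ?_⟩
  · intro y
    have : ∑ y', H y y' = c * ∑ a : Y, Real.exp (-(ε * G.dist y a)) := by
      rw [Finset.mul_sum]; exact Finset.sum_congr rfl fun a _ => hH y a
    rw [this, hrow y, hc]
    field_simp
  · intro z y y' hadj
    rw [hH, hH, ← mul_assoc, mul_comm (Real.exp ε) c, mul_assoc, ← Real.exp_add]
    refine mul_le_mul_of_nonneg_left ?_ hcpos.le
    refine Real.exp_le_exp.mpr ?_
    have htri : G.dist y' z ≤ G.dist y' y + G.dist y z := hconn.dist_triangle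
    have h1 : G.dist y' y = 1 := SimpleGraph.dist_eq_one_iff_adj.mpr hadj.symm
    rw [h1] at htri
    have : (G.dist y' z : ℝ) ≤ 1 + (G.dist y z : ℝ) := by exact_mod_cast htri
    nlinarith
  · intro g
    calc ∑ z, (1 / (Fintype.card Y : ℝ)) * H (g z) z
        ≤ ∑ z : Y, (1 / (Fintype.card Y : ℝ)) * c := by
          refine Finset.sum_le_sum fun z _ => ?_
          exact mul_le_mul_of_nonneg_left (hHle (g z) z) (by positivity)
      _ = c := by
          rw [Finset.sum_const, Finset.card_univ, nsmul_eq_mul]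
          field_simp
  · have : ∀ z : Y, H z z = c := fun z => by
      rw [hH, SimpleGraph.dist_self]; simp
    rw [Finset.sum_congr rfl fun z _ => by rw [this z]]
    rw [Finset.sum_const, Finset.card_univ, nsmul_eq_mul]
    field_simp
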